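/- Let A be a countably infinite oligomorphic relational structure without algebraicity. Then for every a ∈ A, the set {s ∈ End(A) : a ∈ range(s)} is open in the Zariski topology on the monoid End(A). -/

import Mathlib

/-- Evaluation of the word `p_k · s · p_{k-1} · s ⋯ s · p_0` at `s`,
where the word is given by its lowest coefficient `p₀` and the list
`ps = [p₁, …, p_k]` of the remaining coefficients. -/
def wordEval {S : Type*} [Monoid S] (s : S) (p₀ : S) (ps : List S) : S :=
  ps.foldl (fun acc q => q * s * acc) p₀

/-- The Zariski topology on a monoid `S`: generated by the sets
`M_{φ,ψ} = {s | φ(s) ≠ ψ(s)}` for all pairs of words `φ, ψ` with coefficients in `S`. -/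
def zariskiTopology (S : Type*) [Monoid S] : TopologicalSpace S :=
  TopologicalSpace.generateFrom
    { M : Set S | ∃ (p₀ : S) (ps : List S) (q₀ : S) (qs : List S),
        M = { s : S | wordEval s p₀ ps ≠ wordEval s q₀ qs } }

/-- The topology of pointwise convergence on functions `A → A`:
the product topology where every factor `A` is discrete. -/
def pwTop (A : Type*) : TopologicalSpace (A → A) :=
  @Pi.topologicalSpace A (fun _ => A) (fun _ => ⊥)

/-- `f` is a homomorphism between the relational structures `⟨A, R⟩` and `⟨B, S⟩`
(same relational language: index set `ι` with arities `ar`). -/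
def IsHomOn {ι : Type*} {ar : ι → ℕ} {A B : Type*}
    (R : ∀ i, (Fin (ar i) → A) → Prop) (S : ∀ i, (Fin (ar i) → B) → Prop)
    (f : A → B) : Prop :=
  ∀ i x, R i x → S i (fun j => f (x j))

/-- `f` is an automorphism of the relational structure `⟨A, R⟩`. -/
def IsAutoOn {ι : Type*} {ar : ι → ℕ} {A : Type*}
    (R : ∀ i, (Fin (ar i) → A) → Prop) (f : A → A) : Prop :=
  Function.Bijective f ∧ ∀ i x, R i x ↔ R i (fun j => f (x j))

/-- `⟨A, R⟩` is oligomorphic: for every `n ≥ 1`, the diagonal action of the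
automorphism group on `n`-tuples has finitely many orbits. -/
def Oligomorphic {ι : Type*} {ar : ι → ℕ} {A : Type*}
    (R : ∀ i, (Fin (ar i) → A) → Prop) : Prop :=
  ∀ n : ℕ, 1 ≤ n →
    {O : Set (Fin n → A) | ∃ x : Fin n → A,
      O = {y | ∃ f, IsAutoOn R f ∧ y = fun j => f (x j)}}.Finite

/-- `⟨A, R⟩` has no algebraicity: for every finite `Y ⊆ A` and `a ∉ Y`, the orbit
of `a` under automorphisms fixing `Y` pointwise is infinite. -/
def NoAlgebraicity {ι : Type*} {ar : ι → ℕ} {A : Type*}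
    (R : ∀ i, (Fin (ar i) → A) → Prop) : Prop :=
  ∀ (Y : Finset A) (a : A), a ∉ Y →
    {b : A | ∃ f, IsAutoOn R f ∧ (∀ y ∈ Y, f y = y) ∧ f a = b}.Infinite

/-- The endomorphism monoid of the relational structure `⟨A, R⟩`, as a submonoid of
`Function.End A` (self-maps of `A` under composition). -/
def endSubmonoid {ι : Type*} {ar : ι → ℕ} {A : Type*}
    (R : ∀ i, (Fin (ar i) → A) → Prop) : Submonoid (Function.End A) where
  carrier := {f | IsHomOn R R f}
  one_mem' := fun _ _ h => h
  mul_mem' := fun {_ _} hf hg i x h => hf i _ (hg i x h)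

section Aux

variable {ι A : Type*} {ar : ι → ℕ} {R : ∀ i, (Fin (ar i) → A) → Prop}

lemma isAutoOn_id' : IsAutoOn R id :=
  ⟨Function.bijective_id, fun _ _ => Iff.rfl⟩

lemma isAutoOn_comp' {f g : A → A} (hf : IsAutoOn R f) (hg : IsAutoOn R g) :
    IsAutoOn R (fun x => f (g x)) :=
  ⟨hf.1.comp hg.1, fun i x => (hg.2 i x).trans (hf.2 i _)⟩

lemma isAutoOn_inv' {f : A → A} (hf : IsAutoOn R f) :
    ∃ f', IsAutoOn R f' ∧ (∀ x, f' (f x) = x) ∧ (∀ x, f (f' x) = x) := by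
  classical
  let e := Equiv.ofBijective f hf.1
  refine ⟨e.symm, ⟨e.symm.bijective, fun i x => ?_⟩,
    fun x => e.symm_apply_apply x, fun x => e.apply_symm_apply x⟩
  have hx : (fun j => f (e.symm (x j))) = x := funext fun j => e.apply_symm_apply (x j)
  conv_lhs => rw [← hx]
  exact (hf.2 i _).symm

/-- The orbit of a tuple under the automorphism group. -/
def zOrb (R : ∀ i, (Fin (ar i) → A) → Prop) {m : ℕ} (x : Fin m → A) : Set (Fin m → A) :=
  {y | ∃ f, IsAutoOn R f ∧ y = fun j => f (x j)}

lemma zOrb_rel {m : ℕ} {x y : Fin m → A} (h : zOrb R x = zOrb R y) :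
    ∃ f, IsAutoOn R f ∧ ∀ j : Fin m, x j = f (y j) := by
  have hx : x ∈ zOrb R y := by
    rw [← h]; exact ⟨id, isAutoOn_id', rfl⟩
  obtain ⟨f, hf, hEq⟩ := hx
  exact ⟨f, hf, fun j => congrFun hEq j⟩

/-- Infinite pigeonhole. -/
lemma zPigeon {β : Type*} {s : Set ℕ} (hs : s.Infinite) {T : Set β} (hT : T.Finite)
    {f : ℕ → β} (hf : ∀ n ∈ s, f n ∈ T) : ∃ b, {n | n ∈ s ∧ f n = b}.Infinite := by
  by_contra hcon
  push_neg at hcon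
  have hfin : ∀ b, {n | n ∈ s ∧ f n = b}.Finite := fun b => hcon b
  have hsub : s ⊆ ⋃ b ∈ T, {n | n ∈ s ∧ f n = b} := fun n hn =>
    Set.mem_biUnion (hf n hn) ⟨hn, rfl⟩
  exact hs ((hT.biUnion fun b _ => hfin b).subset hsub)

/-- The invariant of the Kőnig-style construction. -/
def zInv (R : ∀ i, (Fin (ar i) → A) → Prop) (w : ℕ → ℕ → A) (m : ℕ)
    (st : Set ℕ × (ℕ → A)) : Prop :=
  st.1.Infinite ∧ (∀ n ∈ st.1, m ≤ n) ∧
    ∀ n ∈ st.1, ∃ f, IsAutoOn R f ∧ ∀ j ≤ m + 1, st.2 j = f (w n j)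

end Aux

/-- Main construction: two endomorphisms agreeing exactly off `a`. -/
lemma exists_pq {ι A : Type*} {ar : ι → ℕ} [Countable A] [Infinite A]
    (R : ∀ i, (Fin (ar i) → A) → Prop)
    (holig : Oligomorphic R) (halg : NoAlgebraicity R) (a : A) :
    ∃ p q : A → A, IsHomOn R R p ∧ IsHomOn R R q ∧ p a ≠ q a ∧
      ∀ x, x ≠ a → p x = q x := by
  classical
  -- enumeration of A starting with a
  obtain ⟨e, he0⟩ : ∃ e : ℕ ≃ A, e 0 = a := by
    have : Encodable A := Encodable.ofCountable A
    have : Denumerable A := Denumerable.ofEncodableOfInfinite A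
    refine ⟨(Equiv.swap 0 (((Denumerable.eqv A).symm).symm a)).trans (Denumerable.eqv A).symm, ?_⟩
    simp
  have hesymm : ∀ x : A, e.symm x = 0 ↔ x = a := fun x => by
    rw [Equiv.symm_apply_eq, he0]
  -- no algebraicity: automorphisms fixing e 1, …, e n and moving a
  have halg' : ∀ n : ℕ, ∃ b : A, ∃ f : A → A, IsAutoOn R f ∧
      (∀ k, 1 ≤ k → k ≤ n → f (e k) = e k) ∧ f a = b ∧ b ≠ a := by
    intro n
    have hY : a ∉ (Finset.Icc 1 n).image e := by
      intro hmem
      obtain ⟨k, hk, hek⟩ := Finset.mem_image.mp hmem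
      have hk0 : (0 : ℕ) = k := e.injective (he0.trans hek.symm)
      have := Finset.mem_Icc.mp hk
      omega
    have hinf := halg ((Finset.Icc 1 n).image e) a hY
    obtain ⟨b, hb⟩ := (hinf.diff (Set.finite_singleton a)).nonempty
    obtain ⟨⟨f, hf, hfixY, hfab⟩, hbna⟩ := hb
    exact ⟨b, f, hf,
      fun k h1 h2 => hfixY (e k) (Finset.mem_image_of_mem e (Finset.mem_Icc.mpr ⟨h1, h2⟩)),
      hfab, by simpa using hbna⟩
  choose balg falg hauto hfix hfa hbne using halg'
  -- the witness tuples
  obtain ⟨w, hw0, hw1, hwk⟩ : ∃ w : ℕ → ℕ → A, (∀ n, w n 0 = a) ∧ (∀ n, w n 1 = balg n) ∧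
      ∀ n k, 1 ≤ k → w n (k + 1) = e k :=
    ⟨fun n k => if k = 0 then a else if k = 1 then balg n else e (k - 1),
      fun n => rfl, fun n => rfl, fun n k hk => by
        show (if k + 1 = 0 then a else if k + 1 = 1 then balg n else e (k + 1 - 1)) = e k
        rw [if_neg (by omega), if_neg (by omega)]
        congr 1⟩
  -- base of the construction
  have hbase : ∃ st, zInv R w 0 st := by
    obtain ⟨O, hO⟩ := zPigeon (Set.infinite_univ : (Set.univ : Set ℕ).Infinite)
      (holig 2 (by omega)) (f := fun n => zOrb R (fun j : Fin 2 => w n j.val))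
      (fun n _ => ⟨_, rfl⟩)
    obtain ⟨n₀, hn₀⟩ := hO.nonempty
    refine ⟨⟨_, w n₀⟩, hO, fun n _ => Nat.zero_le n, fun n hn => ?_⟩
    obtain ⟨f, hf, hfj⟩ := zOrb_rel (R := R) (hn₀.2.trans hn.2.symm)
    exact ⟨f, hf, fun j hj => hfj ⟨j, by omega⟩⟩
  -- step of the construction
  have hstep : ∀ m st, zInv R w m st →
      ∃ st', zInv R w (m + 1) st' ∧ ∀ j ≤ m + 1, st'.2 j = st.2 j := by
    rintro m ⟨N, t⟩ ⟨hNinf, hNge, hNrel⟩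
    have hN' : {n | n ∈ N ∧ m + 1 ≤ n}.Infinite := by
      have hsub : N \ {n | n < m + 1} ⊆ {n | n ∈ N ∧ m + 1 ≤ n} := fun n hn =>
        ⟨hn.1, by simpa [Nat.not_lt] using hn.2⟩
      exact (hNinf.diff (Set.finite_lt_nat (m + 1))).mono hsub
    obtain ⟨O, hO⟩ := zPigeon hN' (holig (m + 3) (by omega))
      (f := fun n => zOrb R (fun j : Fin (m + 3) => w n j.val)) (fun n _ => ⟨_, rfl⟩)
    obtain ⟨n₁, hn₁⟩ := hO.nonempty
    obtain ⟨f₁, hf₁, hrel₁⟩ := hNrel n₁ hn₁.1.1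
    refine ⟨⟨_, fun j => f₁ (w n₁ j)⟩,
      ⟨hO, fun n hn => hn.1.2, fun n hn => ?_⟩, fun j hj => (hrel₁ j hj).symm⟩
    obtain ⟨g, hg, hgj⟩ := zOrb_rel (R := R) (hn₁.2.trans hn.2.symm)
    exact ⟨fun x => f₁ (g x), isAutoOn_comp' hf₁ hg,
      fun j hj => congrArg f₁ (hgj ⟨j, by omega⟩)⟩
  -- the chain
  obtain ⟨T, hTinv, hTcoh⟩ : ∃ T : ℕ → Set ℕ × (ℕ → A), (∀ m, zInv R w m (T m)) ∧
      ∀ m, ∀ j ≤ m + 1, (T (m + 1)).2 j = (T m).2 j := by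
    choose st0 hst0 using hbase
    choose stf h1 h2 using hstep
    let Tc : ∀ m : ℕ, {st // zInv R w m st} :=
      fun m => Nat.rec ⟨st0, hst0⟩ (fun m ih => ⟨stf m ih.1 ih.2, h1 m ih.1 ih.2⟩) m
    exact ⟨fun m => (Tc m).1, fun m => (Tc m).2, fun m => h2 m (Tc m).1 (Tc m).2⟩
  -- stability of values along the chain
  have hstable : ∀ m m', m ≤ m' → ∀ j, j ≤ m + 1 → (T m').2 j = (T m).2 j := by
    intro m m' hmm'
    induction m', hmm' using Nat.le_induction with
    | base => exact fun j _ => rfl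
    | succ m' h ih => exact fun j hj => (hTcoh m' j (by omega)).trans (ih j hj)
  have hval : ∀ m j, j ≤ m + 1 → (T m).2 j = (T j).2 j := by
    intro m j hj
    rcases le_total m j with h | h
    · exact (hstable m j h j hj).symm
    · exact hstable j m h j (Nat.le_succ j)
  -- per-level automorphism packages
  have hmain : ∀ m, ∃ g h : A → A, IsAutoOn R g ∧ IsAutoOn R h ∧
      g a = (T 0).2 0 ∧ (∀ k, 1 ≤ k → k ≤ m → g (e k) = (T (k + 1)).2 (k + 1)) ∧
      h ((T 0).2 0) = (T 1).2 1 ∧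
      (∀ k, 1 ≤ k → k ≤ m → h ((T (k + 1)).2 (k + 1)) = (T (k + 1)).2 (k + 1)) ∧
      (T 0).2 0 ≠ (T 1).2 1 := by
    intro m
    obtain ⟨hNinf, hNge, hNrel⟩ := hTinv m
    obtain ⟨n, hn⟩ := hNinf.nonempty
    obtain ⟨f, hf, hrel⟩ := hNrel n hn
    obtain ⟨f', hf', hl, hr⟩ := isAutoOn_inv' hf
    have hnm : m ≤ n := hNge n hn
    have hv0 : (T 0).2 0 = f a := by
      have h1 := hrel 0 (by omega)
      rw [hval m 0 (by omega), hw0 n] at h1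
      exact h1
    have hv1 : (T 1).2 1 = f (balg n) := by
      have h1 := hrel 1 (by omega)
      rw [hval m 1 (by omega), hw1 n] at h1
      exact h1
    have hvk : ∀ k, 1 ≤ k → k ≤ m → (T (k + 1)).2 (k + 1) = f (e k) := by
      intro k h1 h2
      have h3 := hrel (k + 1) (by omega)
      rw [hval m (k + 1) (by omega), hwk n k h1] at h3
      exact h3
    refine ⟨f, fun x => f (falg n (f' x)), hf,
      isAutoOn_comp' hf (isAutoOn_comp' (hauto n) hf'),
      hv0.symm, fun k h1 h2 => (hvk k h1 h2).symm, ?_, ?_, ?_⟩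
    · show f (falg n (f' ((T 0).2 0))) = (T 1).2 1
      rw [hv0, hv1, hl a, hfa n]
    · intro k h1 h2
      show f (falg n (f' ((T (k + 1)).2 (k + 1)))) = (T (k + 1)).2 (k + 1)
      rw [hvk k h1 h2, hl (e k), hfix n k h1 (le_trans h2 hnm)]
    · rw [hv0, hv1]
      exact fun hEq => hbne n (hf.1.1 hEq).symm
  -- define p and q
  obtain ⟨p, q, hpa, hqa, hpk, hqk⟩ : ∃ p q : A → A,
      p a = (T 0).2 0 ∧ q a = (T 1).2 1 ∧
      (∀ x, x ≠ a → p x = (T (e.symm x + 1)).2 (e.symm x + 1)) ∧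
      (∀ x, x ≠ a → q x = (T (e.symm x + 1)).2 (e.symm x + 1)) :=
    ⟨fun x => if x = a then (T 0).2 0 else (T (e.symm x + 1)).2 (e.symm x + 1),
     fun x => if x = a then (T 1).2 1 else (T (e.symm x + 1)).2 (e.symm x + 1),
     if_pos rfl, if_pos rfl, fun x hx => if_neg hx, fun x hx => if_neg hx⟩
  have homp : IsHomOn R R p := by
    intro i x hx
    obtain ⟨g, h, hg, hh, hga, hgk, hh0, hhk, hne⟩ :=
      hmain (Finset.univ.sup fun j => e.symm (x j))
    have hpx : (fun j => p (x j)) = fun j => g (x j) := by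
      funext j
      by_cases hj : x j = a
      · rw [hj, hpa, ← hga]
      · have h1 : 1 ≤ e.symm (x j) :=
          Nat.one_le_iff_ne_zero.mpr (fun h0 => hj ((hesymm (x j)).mp h0))
        rw [hpk (x j) hj, ← hgk (e.symm (x j)) h1
            (Finset.le_sup (f := fun j => e.symm (x j)) (Finset.mem_univ j)),
          Equiv.apply_symm_apply]
    rw [hpx]
    exact (hg.2 i x).mp hx
  have homq : IsHomOn R R q := by
    intro i x hx
    obtain ⟨g, h, hg, hh, hga, hgk, hh0, hhk, hne⟩ :=
      hmain (Finset.univ.sup fun j => e.symm (x j))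
    have hqx : (fun j => q (x j)) = fun j => h (g (x j)) := by
      funext j
      by_cases hj : x j = a
      · rw [hj, hqa, hga, hh0]
      · have h1 : 1 ≤ e.symm (x j) :=
          Nat.one_le_iff_ne_zero.mpr (fun h0 => hj ((hesymm (x j)).mp h0))
        have h2 : e.symm (x j) ≤ Finset.univ.sup fun j => e.symm (x j) :=
          Finset.le_sup (f := fun j => e.symm (x j)) (Finset.mem_univ j)
        have e1 : g (x j) = (T (e.symm (x j) + 1)).2 (e.symm (x j) + 1) := by
          conv_lhs => rw [← e.apply_symm_apply (x j)]
          exact hgk _ h1 h2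
        have e2 : h (g (x j)) = (T (e.symm (x j) + 1)).2 (e.symm (x j) + 1) := by
          rw [e1]; exact hhk _ h1 h2
        rw [hqk (x j) hj]
        exact e2.symm
    rw [hqx]
    exact (hh.2 i (fun j => g (x j))).mp ((hg.2 i x).mp hx)
  refine ⟨p, q, homp, homq, ?_, fun x hx => (hpk x hx).trans (hqk x hx).symm⟩
  obtain ⟨g, h, hg, hh, hga, hgk, hh0, hhk, hne⟩ := hmain 0
  rw [hpa, hqa]
  exact hne

/-- For an ω-categorical structure `A` without algebraicity, for each `a ∈ A` the
set of endomorphisms whose image contains `a` is Zariski-open in `End(A)`. -/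
theorem stmt4 {ι A : Type*} {ar : ι → ℕ} [Countable A] [Infinite A]
    (R : ∀ i, (Fin (ar i) → A) → Prop)
    (holig : Oligomorphic R) (halg : NoAlgebraicity R) (a : A) :
    @IsOpen ↥(endSubmonoid R) (zariskiTopology ↥(endSubmonoid R))
      {s : ↥(endSubmonoid R) | a ∈ Set.range (s.1 : A → A)} := by
  classical
  obtain ⟨p, q, hp, hq, hne', hagree⟩ := exists_pq R holig halg a
  have hpP : p ∈ endSubmonoid R := hp
  have hqQ : q ∈ endSubmonoid R := hq
  set P : ↥(endSubmonoid R) := ⟨p, hpP⟩ with hPdef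
  set Q : ↥(endSubmonoid R) := ⟨q, hqQ⟩ with hQdef
  have hPs : ∀ s : ↥(endSubmonoid R), wordEval s 1 [P] = P * s := fun s => by
    simp [wordEval]
  have hQs : ∀ s : ↥(endSubmonoid R), wordEval s 1 [Q] = Q * s := fun s => by
    simp [wordEval]
  have hset : {s : ↥(endSubmonoid R) | a ∈ Set.range (s.1 : A → A)} =
      {s : ↥(endSubmonoid R) | wordEval s 1 [P] ≠ wordEval s 1 [Q]} := by
    ext s
    simp only [Set.mem_setOf_eq]
    rw [hPs s, hQs s]
    constructor
    · rintro ⟨c, hc⟩ hEq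
      have h2 : p (s.1 c) = q (s.1 c) := congrFun (congrArg Subtype.val hEq) c
      rw [hc] at h2
      exact hne' h2
    · intro hne2
      by_contra hnr
      apply hne2
      apply Subtype.ext
      funext c
      exact hagree (s.1 c) (fun h => hnr ⟨c, h⟩)
  rw [hset]
  exact TopologicalSpace.GenerateOpen.basic _ ⟨1, [P], 1, [Q], rfl⟩
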